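/- Let v₁, …, v_k be vectors in ℤⁿ and let M = {x : Fin n → ℤ | ∀ i, ∑ j, (vᵢ j) * (x j) ≥ 0} be the additive monoid of lattice points of the rational polyhedral cone they cut out. Then the monoid algebra AddMonoidAlgebra ℂ M is a finitely generated ℂ-algebra (it is of finite type over ℂ). -/

import Mathlib

open AddSubmonoid Finset

section Gordan

/-- The ℕ-linear-combination homomorphism. -/
private def combo {G : Type*} [AddCommMonoid G] {d : ℕ} (g : Fin d → G) :
    (Fin d → ℕ) →+ G where
  toFun a := ∑ i, a i • g i
  map_zero' := by simp
  map_add' a b := by simp [add_smul, Finset.sum_add_distrib]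

private lemma mrange_combo {G : Type*} [AddCommMonoid G] {d : ℕ} (g : Fin d → G) :
    AddMonoidHom.mrange (combo g) = closure (Set.range g) := by
  apply le_antisymm
  · rintro x ⟨a, rfl⟩
    show ∑ i, a i • g i ∈ AddSubmonoid.closure (Set.range g)
    exact sum_mem fun i _ => nsmul_mem (subset_closure (Set.mem_range_self i)) _
  · rw [closure_le]
    rintro x ⟨i, rfl⟩
    refine ⟨Pi.single i 1, ?_⟩
    simp [combo, Pi.single_apply, ite_smul, Finset.sum_ite_eq']

/-- The monoid of ℕ-solutions of a homogeneous linear equation. -/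
private def eqKer {d : ℕ} (F : (Fin d → ℕ) →+ ℤ) : AddSubmonoid (Fin d → ℕ) where
  carrier := {a | F a = 0}
  zero_mem' := by simp
  add_mem' := by
    intro a b ha hb
    simp only [Set.mem_setOf_eq, map_add] at *
    rw [ha, hb, add_zero]

private lemma eqKer_fg {d : ℕ} (F : (Fin d → ℕ) →+ ℤ) : (eqKer F).FG := by
  classical
  set T : Set (Fin d → ℕ) := {a | F a = 0 ∧ a ≠ 0} with hT
  set U : Set (Fin d → ℕ) := {a | a ∈ T ∧ ∀ b ∈ T, b ≤ a → b = a} with hU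
  have hUanti : IsAntichain (· ≤ ·) U := by
    intro a ha b hb hne hab
    exact hne (hb.2 a ha.1 hab)
  have hUfin : U.Finite := hUanti.finite_of_partiallyWellOrderedOn
    (Set.isPWO_of_wellQuasiOrderedLE U)
  -- every element of T dominates a minimal one
  have hmin : ∀ a ∈ T, ∃ m ∈ U, m ≤ a := by
    intro a ha
    set s : Set ℕ := (fun b => ∑ i, b i) '' {b | b ∈ T ∧ b ≤ a} with hs
    have hsne : s.Nonempty := ⟨_, ⟨a, ⟨ha, le_refl a⟩, rfl⟩⟩
    obtain ⟨m, ⟨hmT, hma⟩, hmsum⟩ := Nat.sInf_mem hsne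
    refine ⟨m, ⟨hmT, ?_⟩, hma⟩
    intro b hb hbm
    have hsumle : ∑ i, b i ≤ ∑ i, m i := Finset.sum_le_sum fun i _ => hbm i
    have hbs : ∑ i, b i ∈ s := ⟨b, ⟨hb, le_trans hbm hma⟩, rfl⟩
    have h2 : ∑ i, m i ≤ ∑ i, b i := by
      rw [show ∑ i, m i = sInf s from hmsum]
      exact Nat.sInf_le hbs
    have hsumeq : ∑ i, b i = ∑ i, m i := le_antisymm hsumle h2
    funext i
    exact (Finset.sum_eq_sum_iff_of_le fun i _ => hbm i).1 hsumeq i (Finset.mem_univ i)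
  -- decomposition
  have key : ∀ N : ℕ, ∀ a : Fin d → ℕ, (∑ i, a i) ≤ N → F a = 0 → a ∈ AddSubmonoid.closure U := by
    intro N
    induction N with
    | zero =>
      intro a hsum _
      have ha : a = 0 := funext fun i => Nat.le_zero.mp (le_trans
        (Finset.single_le_sum (f := a) (fun i _ => Nat.zero_le _) (Finset.mem_univ i)) hsum)
      rw [ha]
      exact zero_mem _
    | succ N ih =>
      intro a hsum hFa
      by_cases h0 : a = 0
      · rw [h0]; exact zero_mem _
      obtain ⟨m, hmU, hma⟩ := hmin a ⟨hFa, h0⟩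
      have hm0 : m ≠ 0 := hmU.1.2
      have hdecomp : a = (a - m) + m := by
        funext i
        exact (Nat.sub_add_cancel (hma i)).symm
      have hFm : F m = 0 := hmU.1.1
      have hFam : F (a - m) = 0 := by
        have := map_add F (a - m) m
        rw [← hdecomp, hFa, hFm, add_zero] at this
        exact this.symm
      have hmsum : 1 ≤ ∑ i, m i := by
        obtain ⟨i, hi⟩ : ∃ i, m i ≠ 0 := by
          by_contra h
          push_neg at h
          exact hm0 (funext fun i => h i)
        calc 1 ≤ m i := Nat.one_le_iff_ne_zero.2 hi
        _ ≤ ∑ i, m i := Finset.single_le_sum (fun i _ => Nat.zero_le _) (Finset.mem_univ i)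
      have hsub : ∑ i, (a - m) i ≤ N := by
        have h1 : ∑ i, (a - m) i + ∑ i, m i = ∑ i, a i := by
          rw [← Finset.sum_add_distrib]
          exact Finset.sum_congr rfl fun i _ => Nat.sub_add_cancel (hma i)
        omega
      have := ih (a - m) hsub hFam
      rw [hdecomp]
      exact add_mem this (subset_closure hmU)
  have : eqKer F = AddSubmonoid.closure U := by
    apply le_antisymm
    · intro a ha
      exact key (∑ i, a i) a le_rfl ha
    · rw [closure_le]
      intro a ha
      exact ha.1.1
  rw [this, AddSubmonoid.fg_iff]
  exact ⟨U, rfl, hUfin⟩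

/-- The nonnegativity locus of an integer-valued hom. -/
private def posSet {G : Type*} [AddCommMonoid G] (f : G →+ ℤ) : AddSubmonoid G where
  carrier := {x | 0 ≤ f x}
  zero_mem' := by simp
  add_mem' := by
    intro a b ha hb
    simp only [Set.mem_setOf_eq, map_add] at *
    exact add_nonneg ha hb

private lemma mem_posSet {G : Type*} [AddCommMonoid G] (f : G →+ ℤ) (x : G) :
    x ∈ posSet f ↔ 0 ≤ f x := Iff.rfl

private def projHom (d : ℕ) : (Fin (d + 1) → ℕ) →+ (Fin d → ℕ) where
  toFun b := b ∘ Fin.castSucc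
  map_zero' := rfl
  map_add' _ _ := rfl

/-- Gordan-type step: intersecting an f.g. submonoid with a half-space keeps it f.g. -/
private lemma inf_posSet_fg {G : Type*} [AddCommMonoid G] {N : AddSubmonoid G}
    (hN : N.FG) (f : G →+ ℤ) : (N ⊓ posSet f).FG := by
  classical
  obtain ⟨S, hS⟩ := hN
  set d := S.card with hd
  obtain ⟨g, hg⟩ : ∃ g : Fin d → G, Set.range g = ↑S := by
    refine ⟨fun i => (S.equivFin.symm i : G), ?_⟩
    ext x
    constructor
    · rintro ⟨i, rfl⟩; exact (S.equivFin.symm i).2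
    · intro hx; exact ⟨S.equivFin ⟨x, hx⟩, by simp⟩
  set F : (Fin (d + 1) → ℕ) →+ ℤ :=
    { toFun := fun b => f (combo g (b ∘ Fin.castSucc)) - b (Fin.last d)
      map_zero' := by simp [show (0 : Fin (d+1) → ℕ) ∘ Fin.castSucc = 0 from rfl]
      map_add' := by
        intro a b
        show f (combo g ((a + b) ∘ Fin.castSucc)) - ((a + b) (Fin.last d) : ℤ) =
          (f (combo g (a ∘ Fin.castSucc)) - a (Fin.last d)) +
          (f (combo g (b ∘ Fin.castSucc)) - b (Fin.last d))
        have h : (a + b) ∘ Fin.castSucc = a ∘ Fin.castSucc + b ∘ Fin.castSucc := rfl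
        have h2 : (a + b) (Fin.last d) = a (Fin.last d) + b (Fin.last d) := rfl
        rw [h, h2, map_add, map_add]
        push_cast
        ring } with hF
  set ψ : (Fin (d + 1) → ℕ) →+ G := (combo g).comp (projHom d) with hψ
  have hmap : (eqKer F).map ψ = N ⊓ posSet f := by
    ext x
    constructor
    · rintro ⟨b, hb, rfl⟩
      have hb' : f (combo g (b ∘ Fin.castSucc)) = b (Fin.last d) := by
        have : F b = 0 := hb
        simp only [hF, AddMonoidHom.coe_mk, ZeroHom.coe_mk] at this
        omega
      constructor
      · have : combo g (b ∘ Fin.castSucc) ∈ AddMonoidHom.mrange (combo g) := ⟨_, rfl⟩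
        rw [mrange_combo, hg, hS] at this
        exact this
      · show (0:ℤ) ≤ f (combo g (b ∘ Fin.castSucc))
        rw [hb']
        exact Int.natCast_nonneg _
    · rintro ⟨hxN, hxf⟩
      replace hxf : (0:ℤ) ≤ f x := hxf
      have : x ∈ AddMonoidHom.mrange (combo g) := by rw [mrange_combo, hg, hS]; exact hxN
      obtain ⟨a, rfl⟩ := this
      refine ⟨Fin.snoc a (f (combo g a)).toNat, ?_, ?_⟩
      · show F _ = 0
        have h1 : (Fin.snoc a (f (combo g a)).toNat : Fin (d+1) → ℕ) ∘ Fin.castSucc = a := by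
          funext i; simp [Fin.snoc_castSucc]
        simp only [hF, AddMonoidHom.coe_mk, ZeroHom.coe_mk, h1, Fin.snoc_last]
        rw [Int.toNat_of_nonneg hxf]
        ring
      · show combo g ((Fin.snoc a (f (combo g a)).toNat : Fin (d+1) → ℕ) ∘ Fin.castSucc) = _
        congr 1
        funext i
        simp [Fin.snoc_castSucc]
  rw [← hmap]
  exact AddSubmonoid.FG.map (eqKer_fg F) ψ

private def ineqHom {n : ℕ} (c : Fin n → ℤ) : (Fin n → ℤ) →+ ℤ where
  toFun x := ∑ j, c j * x j
  map_zero' := by simp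
  map_add' x y := by simp [mul_add, Finset.sum_add_distrib]

private lemma top_fg (n : ℕ) : (⊤ : AddSubmonoid (Fin n → ℤ)).FG := by
  classical
  refine ⟨(Finset.univ.image fun j : Fin n => Pi.single j (1 : ℤ)) ∪
      (Finset.univ.image fun j : Fin n => Pi.single j (-1 : ℤ)), ?_⟩
  rw [eq_top_iff]
  intro x _
  have hx : x = ∑ j, Pi.single j (x j) := (Finset.univ_sum_single x).symm
  rw [hx]
  refine sum_mem fun j _ => ?_
  have h1 : Pi.single j (1 : ℤ) ∈ AddSubmonoid.closure
      (((Finset.univ.image fun j : Fin n => Pi.single j (1 : ℤ)) ∪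
        (Finset.univ.image fun j : Fin n => Pi.single j (-1 : ℤ)) : Finset (Fin n → ℤ)) : Set (Fin n → ℤ)) :=
    subset_closure (Finset.mem_coe.2 (Finset.mem_union_left _
      (Finset.mem_image_of_mem _ (Finset.mem_univ j))))
  have h2 : Pi.single j (-1 : ℤ) ∈ AddSubmonoid.closure
      (((Finset.univ.image fun j : Fin n => Pi.single j (1 : ℤ)) ∪
        (Finset.univ.image fun j : Fin n => Pi.single j (-1 : ℤ)) : Finset (Fin n → ℤ)) : Set (Fin n → ℤ)) :=
    subset_closure (Finset.mem_coe.2 (Finset.mem_union_right _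
      (Finset.mem_image_of_mem _ (Finset.mem_univ j))))
  have hdecomp : (Pi.single j (x j) : Fin n → ℤ) =
      (x j).toNat • Pi.single j (1 : ℤ) + (-(x j)).toNat • Pi.single j (-1 : ℤ) := by
    funext i
    by_cases h : i = j
    · subst h
      simp [Pi.single_apply]
      omega
    · simp [Pi.single_apply, h]
  rw [hdecomp]
  exact add_mem (nsmul_mem h1 _) (nsmul_mem h2 _)

private lemma cone_fg (n : ℕ) : ∀ (k : ℕ) (v : Fin k → Fin n → ℤ),
    (⨅ i, posSet (ineqHom (v i))).FG := by
  intro k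
  induction k with
  | zero =>
    intro v
    have h : (⨅ i : Fin 0, posSet (ineqHom (v i))) = ⊤ := by
      apply le_antisymm le_top
      exact le_iInf fun i => i.elim0
    rw [h]
    exact top_fg n
  | succ k ih =>
    intro v
    have hsplit : (⨅ i, posSet (ineqHom (v i))) =
        (⨅ i : Fin k, posSet (ineqHom (v i.castSucc))) ⊓ posSet (ineqHom (v (Fin.last k))) := by
      apply le_antisymm
      · exact le_inf (le_iInf fun i => iInf_le _ i.castSucc) (iInf_le _ (Fin.last k))
      · refine le_iInf fun i => ?_
        refine Fin.lastCases ?_ ?_ i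
        · exact inf_le_right
        · intro j
          exact inf_le_left.trans (iInf_le _ j)
    rw [hsplit]
    exact inf_posSet_fg (ih _) _

end Gordan

/-- The coordinate ring of an affine toric variety is of finite type over ℂ:
the monoid algebra of the lattice points of a rational polyhedral cone is a
finitely generated ℂ-algebra (a consequence of Gordan's Lemma). -/
theorem toric_coordinate_ring_finiteType
    (n k : ℕ) (v : Fin k → Fin n → ℤ)
    (M : AddSubmonoid (Fin n → ℤ))
    (hM : (M : Set (Fin n → ℤ)) = {x : Fin n → ℤ | ∀ i, 0 ≤ ∑ j, v i j * x j}) :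
    Algebra.FiniteType ℂ (AddMonoidAlgebra ℂ M) := by
  have hMeq : M = ⨅ i, posSet (ineqHom (v i)) := by
    apply SetLike.ext'
    rw [hM]
    ext x
    simp only [Set.mem_setOf_eq, SetLike.mem_coe, AddSubmonoid.mem_iInf, mem_posSet, ineqHom,
      AddMonoidHom.coe_mk, ZeroHom.coe_mk]
  have hfg : M.FG := by rw [hMeq]; exact cone_fg n k v
  have : AddMonoid.FG M := (AddMonoid.fg_iff_addSubmonoid_fg M).2 hfg
  infer_instance
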